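/- For integers 1 ≤ k₁ < k₂ < ... < kₘ ≤ n and nonnegative integers c₁,...,cₘ, the integral over the unit cube [0,1]^n of the product ∏_{j=1}^m (x_{(k_j)})^{c_j}, where x_{(k)} denotes the k-th order statistic of (x₁,...,xₙ), equals (n! / (n + ∑_{j=1}^m c_j)!) · ∏_{j=1}^m [(k_j - 1 + ∑_{i=1}^j c_i)! / (k_j - 1 + ∑_{i=1}^{j-1} c_i)!]. -/

import Mathlib

open MeasureTheory Finset

/-- The `k`-th order statistic of `x : Fin n → ℝ`, with conventions
`oStat x 0 = 0` and `oStat x k = 1` for `k > n`. For `1 ≤ k ≤ n` it is the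
`k`-th smallest coordinate of `x`. -/
noncomputable def oStat {n : ℕ} (x : Fin n → ℝ) (k : ℕ) : ℝ :=
  if k = 0 then 0
  else if k ≤ n then ((Finset.univ.val.map x).sort (· ≤ ·)).getD (k - 1) 0
  else 1

/-- The `k`-th order statistic of the subfamily `(x i)_{i ∈ S}`. -/
noncomputable def oStatS {n : ℕ} (S : Finset (Fin n)) (x : Fin n → ℝ) (k : ℕ) : ℝ :=
  ((S.val.map x).sort (· ≤ ·)).getD (k - 1) 0

noncomputable section

def simplex (n : ℕ) : Set (Fin n → ℝ) :=
  {x | Monotone x ∧ ∀ i, x i ∈ Set.Icc (0:ℝ) 1}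

lemma simplex_subset_Icc (n : ℕ) : simplex n ⊆ Set.Icc (0:Fin n → ℝ) 1 := by
  intro x hx
  constructor <;> intro i
  · exact (hx.2 i).1
  · exact (hx.2 i).2

lemma measurableSet_simplex (n : ℕ) : MeasurableSet (simplex n) := by
  have : simplex n = (⋂ (i : Fin n) (j : Fin n) (_ : i ≤ j), {x : Fin n → ℝ | x i ≤ x j}) ∩
      ((⋂ i, {x | (0:ℝ) ≤ x i}) ∩ (⋂ i, {x | x i ≤ 1})) := by
    ext x
    simp only [simplex, Set.mem_setOf_eq, Set.mem_inter_iff, Set.mem_iInter, Set.mem_Icc,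
      Monotone]
    constructor
    · rintro ⟨h1, h2⟩; exact ⟨fun i j hij => h1 hij, fun i => (h2 i).1, fun i => (h2 i).2⟩
    · rintro ⟨h1, h2, h3⟩; exact ⟨fun i j hij => h1 i j hij, fun i => ⟨h2 i, h3 i⟩⟩
  rw [this]
  refine MeasurableSet.inter ?_ (MeasurableSet.inter ?_ ?_) <;>
    refine MeasurableSet.iInter fun i => ?_
  · exact MeasurableSet.iInter fun j => MeasurableSet.iInter fun _ =>
      measurableSet_le (measurable_pi_apply i) (measurable_pi_apply j)
  · exact measurableSet_le measurable_const (measurable_pi_apply i)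
  · exact measurableSet_le (measurable_pi_apply i) measurable_const

lemma continuous_prod_pow {n : ℕ} (a : Fin n → ℕ) :
    Continuous (fun x : Fin n → ℝ => ∏ i, (x i) ^ (a i)) := by fun_prop

lemma integrableOn_prod_pow {n : ℕ} (a : Fin n → ℕ) {s : Set (Fin n → ℝ)}
    (hs : s ⊆ Set.Icc 0 1) : IntegrableOn (fun x => ∏ i, (x i) ^ (a i)) s := by
  exact ((continuous_prod_pow a).continuousOn.integrableOn_compact isCompact_Icc).mono_set hs

/-- peeling lemma for `Iic` sums over `Fin`. -/
lemma sum_Iic_succ {M : Type*} [AddCommMonoid M] {n : ℕ} (f : Fin (n+1) → M) (i : Fin n) :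
    ∑ j ∈ Iic (i.succ), f j = f 0 + ∑ j ∈ Iic i, f j.succ := by
  have h : Iic (i.succ) = insert (0 : Fin (n+1)) ((Iic i).map (Fin.succEmb n)) := by
    ext j
    simp only [mem_Iic, mem_insert, mem_map, Fin.succEmb]
    constructor
    · intro hj
      rcases Fin.eq_zero_or_eq_succ j with h0 | ⟨j', rfl⟩
      · left; exact h0
      · right; exact ⟨j', by simpa [Fin.succ_le_succ_iff] using hj, rfl⟩
    · rintro (rfl | ⟨j', hj', rfl⟩)
      · exact Fin.zero_le _
      · simpa [Fin.succ_le_succ_iff] using hj'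
  rw [h, Finset.sum_insert (by simp [Fin.succEmb, Fin.succ_ne_zero]), Finset.sum_map]
  rfl

lemma integral_simplex : ∀ (n : ℕ) (a : Fin n → ℕ),
    (∫ x in simplex n, ∏ i, (x i) ^ (a i)) =
      ∏ i : Fin n, (((i:ℕ) + 1 + ∑ j ∈ Iic i, a j : ℕ) : ℝ)⁻¹ := by
  intro n
  induction n with
  | zero =>
    intro a
    have h1 : simplex 0 = Set.univ := by
      ext x; simp [simplex, monotone_iff_forall_lt]
    simp only [h1, Finset.univ_eq_empty, Finset.prod_empty, Measure.restrict_univ]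
    rw [integral_const]
    have : (volume : Measure (Fin 0 → ℝ)) Set.univ = 1 := by
      rw [volume_pi, Measure.pi_univ]; simp
    simp [Measure.real, this]
  | succ n ih =>
    intro a
    set e := MeasurableEquiv.piFinSuccAbove (fun _ : Fin (n+1) => ℝ) 0 with he
    have hmp : MeasurePreserving e volume volume :=
      volume_preserving_piFinSuccAbove (fun _ : Fin (n+1) => ℝ) 0
    set bnd : (Fin n → ℝ) → ℝ := fun z => if h : 0 < n then z ⟨0, h⟩ else 1 with hbnd
    have hbnd_meas : Measurable bnd := by
      rw [hbnd]; split
      · exact measurable_pi_apply _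
      · exact measurable_const
    set F : ℝ × (Fin n → ℝ) → ℝ :=
      fun p => p.1 ^ (a 0) * ∏ i, (p.2 i) ^ (a i.succ) with hF
    have hFcont : Continuous F := by rw [hF]; fun_prop
    set E : Set (ℝ × (Fin n → ℝ)) :=
      {p | p.2 ∈ simplex n ∧ 0 ≤ p.1 ∧ p.1 ≤ bnd p.2} with hE
    have hcons : ∀ (t : ℝ) (z : Fin n → ℝ),
        (Fin.cons t z ∈ simplex (n+1)) ↔ (z ∈ simplex n ∧ 0 ≤ t ∧ t ≤ bnd z) := by
      intro t z
      constructor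
      · rintro ⟨hmono, hIcc⟩
        refine ⟨⟨fun i j hij => ?_, fun i => ?_⟩, ?_, ?_⟩
        · have := hmono (Fin.succ_le_succ_iff.mpr hij)
          simpa using this
        · simpa using hIcc i.succ
        · simpa using (hIcc 0).1
        · by_cases h : 0 < n
          · have hb : bnd z = z ⟨0, h⟩ := by simp only [hbnd, dif_pos h]
            rw [hb]
            have := hmono (Fin.zero_le ((⟨0, h⟩ : Fin n).succ))
            simpa only [Fin.cons_succ, Fin.cons_zero] using this
          · have hb : bnd z = 1 := by simp only [hbnd, dif_neg h]
            rw [hb]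
            simpa using (hIcc 0).2
      · rintro ⟨⟨hzmono, hzIcc⟩, h0t, htb⟩
        have hbnd_le : ∀ i : Fin n, t ≤ z i := by
          intro i
          refine le_trans htb ?_
          have hb : bnd z = z ⟨0, i.pos⟩ := by simp only [hbnd, dif_pos i.pos]
          rw [hb]
          exact hzmono (by simp [Fin.le_def])
        have hbnd_le1 : t ≤ 1 := by
          by_cases h : 0 < n
          · exact le_trans (hbnd_le ⟨0, h⟩) (hzIcc _).2
          · have hb : bnd z = 1 := by simp only [hbnd, dif_neg h]
            rw [hb] at htb; exact htb
        constructor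
        · intro i j hij
          induction i using Fin.cases with
          | zero =>
            induction j using Fin.cases with
            | zero => exact le_refl _
            | succ j' => simpa using hbnd_le j'
          | succ i' =>
            induction j using Fin.cases with
            | zero =>
              exact absurd (Fin.le_zero_iff.mp hij) (Fin.succ_ne_zero i')
            | succ j' =>
              have : i' ≤ j' := by rwa [Fin.succ_le_succ_iff] at hij
              simpa using hzmono this
        · intro i
          induction i using Fin.cases with
          | zero => exact ⟨by simpa using h0t, by simpa using hbnd_le1⟩
          | succ i' => simpa using hzIcc i'
    have hesymm : ∀ p : ℝ × (Fin n → ℝ), e.symm p = Fin.cons p.1 p.2 := by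
      intro p
      rw [he]
      simp only [MeasurableEquiv.piFinSuccAbove_symm_apply, Fin.insertNthEquiv_apply]
      ext i
      simp [Fin.insertNth_zero]
    have himg : e '' simplex (n+1) = E := by
      rw [MeasurableEquiv.image_eq_preimage_symm]
      ext p
      simp only [Set.mem_preimage]
      show e.symm p ∈ simplex (n+1) ↔ _
      rw [hesymm p, hcons]
      rfl
    have hEmeas : MeasurableSet E := by
      rw [hE]
      refine MeasurableSet.inter ?_ (MeasurableSet.inter ?_ ?_)
      · exact measurable_snd (measurableSet_simplex n)
      · exact measurableSet_le measurable_const measurable_fst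
      · exact measurableSet_le measurable_fst (hbnd_meas.comp measurable_snd)
    have hbnd_le_one : ∀ z ∈ simplex n, bnd z ≤ 1 := by
      intro z hz
      simp only [hbnd]; split
      · exact (hz.2 _).2
      · exact le_refl _
    have hbnd_nonneg : ∀ z ∈ simplex n, 0 ≤ bnd z := by
      intro z hz
      simp only [hbnd]; split
      · exact (hz.2 _).1
      · exact zero_le_one
    have hEsub : E ⊆ (Set.Icc (0:ℝ) 1) ×ˢ (Set.Icc (0:Fin n → ℝ) 1) := by
      rintro ⟨t, z⟩ ⟨hz, h0t, htb⟩
      exact ⟨⟨h0t, le_trans htb (hbnd_le_one z hz)⟩, simplex_subset_Icc n hz⟩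
    have hFint : IntegrableOn F E (volume.prod volume) := by
      have : IntegrableOn F ((Set.Icc (0:ℝ) 1) ×ˢ (Set.Icc (0:Fin n → ℝ) 1))
          (volume.prod volume) :=
        hFcont.continuousOn.integrableOn_compact (isCompact_Icc.prod isCompact_Icc)
      exact this.mono_set hEsub
    -- step 1 : transfer to the product space
    have step1 : (∫ x in simplex (n+1), ∏ i, (x i) ^ (a i)) = ∫ p in E, F p ∂(volume.prod volume) := by
      rw [← himg]
      have := hmp.setIntegral_image_emb e.measurableEmbedding F (simplex (n+1))
      rw [MeasureTheory.Measure.volume_eq_prod] at this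
      rw [this]
      refine setIntegral_congr_fun (measurableSet_simplex _) (fun x _ => ?_)
      rw [hF]
      have h1 : (e x).1 = x 0 := rfl
      have h2 : ∀ i : Fin n, (e x).2 i = x i.succ := by
        intro i
        show x ((0:Fin (n+1)).succAbove i) = x i.succ
        rw [Fin.succAbove_zero]
      simp only [h1]
      rw [Fin.prod_univ_succ]
      simp only [h2]
    -- step 2 : Fubini
    have step2 : (∫ p in E, F p ∂(volume.prod volume)) =
        ∫ z in simplex n, ((bnd z) ^ (a 0 + 1)) / ((a 0 : ℝ) + 1) * ∏ i, (z i) ^ (a i.succ) := by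
      rw [← integral_indicator hEmeas]
      rw [integral_prod_symm _ (hFint.integrable_indicator hEmeas)]
      rw [← integral_indicator (measurableSet_simplex n)]
      refine integral_congr_ae (Filter.Eventually.of_forall fun z => ?_)
      by_cases hz : z ∈ simplex n
      · have hin : ∀ t : ℝ, E.indicator F (t, z) =
            (Set.Icc 0 (bnd z)).indicator (fun t => t ^ (a 0) * ∏ i, (z i) ^ (a i.succ)) t := by
          intro t
          by_cases ht : t ∈ Set.Icc 0 (bnd z)
          · rw [Set.indicator_of_mem ht, Set.indicator_of_mem (by exact ⟨hz, ht.1, ht.2⟩)]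
          · rw [Set.indicator_of_notMem ht, Set.indicator_of_notMem
              (fun hc => ht ⟨hc.2.1, hc.2.2⟩)]
        simp only [hin]
        rw [integral_indicator measurableSet_Icc, Set.indicator_of_mem hz]
        rw [MeasureTheory.integral_mul_const, integral_Icc_eq_integral_Ioc,
          ← intervalIntegral.integral_of_le (hbnd_nonneg z hz), integral_pow]
        rw [zero_pow (Nat.succ_ne_zero _)]
        push_cast
        ring
      · have hin : ∀ t : ℝ, E.indicator F (t, z) = 0 := by
          intro t
          exact Set.indicator_of_notMem (fun hc => hz hc.1) _
        simp only [hin]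
        rw [integral_zero, Set.indicator_of_notMem hz]
    rw [step1, step2]
    have hIic0 : ∀ (N : ℕ) (f : Fin (N+1) → ℕ), ∑ j ∈ Iic (0 : Fin (N+1)), f j = f 0 := by
      intro N f
      have : Iic (0 : Fin (N+1)) = {0} := by ext j; simp [Fin.le_zero_iff]
      rw [this, Finset.sum_singleton]
    rcases Nat.eq_zero_or_pos n with hn | hn
    · subst hn
      have hbnd1 : ∀ z : Fin 0 → ℝ, bnd z = 1 := fun z => by
        simp only [hbnd, dif_neg (lt_irrefl 0)]
      have hc : (∫ z in simplex 0, ((bnd z) ^ (a 0 + 1)) / ((a 0 : ℝ) + 1) *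
          ∏ i : Fin 0, (z i) ^ (a i.succ)) = ∫ z in simplex 0, ((a 0 : ℝ) + 1)⁻¹ := by
        refine setIntegral_congr_fun (measurableSet_simplex _) (fun z _ => ?_)
        rw [hbnd1, one_pow, Finset.univ_eq_empty, Finset.prod_empty, mul_one, one_div]
      rw [hc]
      have h1 : simplex 0 = Set.univ := by
        ext z; simp [simplex, monotone_iff_forall_lt]
      rw [h1, Measure.restrict_univ, integral_const]
      have hv : (volume : Measure (Fin 0 → ℝ)) Set.univ = 1 := by
        rw [volume_pi, Measure.pi_univ]; simp
      rw [measureReal_def, hv]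
      rw [Fin.prod_univ_one]
      rw [hIic0 0 a]
      simp only [ENNReal.toReal_one, one_smul, Fin.val_zero]
      congr 1
      push_cast
      ring
    · obtain ⟨n', rfl⟩ : ∃ n', n = n' + 1 := ⟨n - 1, by omega⟩
      have hbz : ∀ z : Fin (n'+1) → ℝ, bnd z = z 0 := fun z => by
        simp only [hbnd, dif_pos (Nat.succ_pos n')]
        rfl
      set a' : Fin (n'+1) → ℕ := Fin.cons (a 0 + a 1 + 1) (fun j => a j.succ.succ) with ha'
      have hsum : ∀ i : Fin (n'+1), ∑ j ∈ Iic i, a' j = (∑ j ∈ Iic i.succ, a j) + 1 := by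
        intro i
        induction i using Fin.cases with
        | zero =>
          rw [hIic0 n' a', sum_Iic_succ a 0, hIic0 n' (fun j => a j.succ)]
          simp only [ha', Fin.cons_zero, Fin.succ_zero_eq_one]
        | succ i' =>
          rw [sum_Iic_succ a' i', sum_Iic_succ a i'.succ, sum_Iic_succ (fun j => a j.succ) i']
          simp only [ha', Fin.cons_zero, Fin.cons_succ, Fin.succ_zero_eq_one]
          ring
      have hint : (∫ z in simplex (n'+1), ((bnd z) ^ (a 0 + 1)) / ((a 0:ℝ) + 1) *
            ∏ i, (z i) ^ (a i.succ))
          = ((a 0 : ℝ) + 1)⁻¹ * ∫ z in simplex (n'+1), ∏ i, (z i) ^ (a' i) := by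
        rw [← MeasureTheory.integral_const_mul]
        refine setIntegral_congr_fun (measurableSet_simplex _) (fun z _ => ?_)
        rw [hbz]
        rw [Fin.prod_univ_succ (f := fun i => z i ^ a' i)]
        simp only [ha', Fin.cons_zero, Fin.cons_succ]
        rw [Fin.prod_univ_succ (f := fun i => z i ^ a i.succ)]
        simp only [Fin.succ_zero_eq_one]
        ring
      rw [hint, ih a']
      rw [Fin.prod_univ_succ (f := fun i : Fin (n'+2) => (((i:ℕ) + 1 + ∑ j ∈ Iic i, a j : ℕ) : ℝ)⁻¹)]
      congr 1
      · rw [hIic0 (n'+1) a]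
        simp only [Fin.val_zero]
        push_cast
        ring
      · refine Finset.prod_congr rfl fun i _ => ?_
        rw [hsum i]
        congr 1
        rw [Fin.val_succ]
        push_cast
        ring

lemma sort_eq_ofFn {n : ℕ} (x : Fin n → ℝ) (σ : Equiv.Perm (Fin n))
    (hσ : Monotone (x ∘ σ)) :
    ((Finset.univ.val.map x).sort (· ≤ ·)) = List.ofFn (x ∘ σ) := by
  refine List.Perm.eq_of_pairwise' (r := (· ≤ ·)) (Multiset.pairwise_sort _ _)
    (List.sortedLE_ofFn_iff.mpr hσ).pairwise ?_
  rw [← Multiset.coe_eq_coe, Multiset.sort_eq, List.ofFn_eq_map]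
  show Multiset.map x Finset.univ.val = ↑(List.map (x ∘ ⇑σ) (List.finRange n))
  have h1 : (↑(List.map (x ∘ ⇑σ) (List.finRange n)) : Multiset ℝ)
      = Multiset.map x (Multiset.map σ (↑(List.finRange n))) := by
    simp [Multiset.map_map]
  rw [h1]
  congr 1
  have h2 : Multiset.map (⇑σ) Finset.univ.val = Finset.univ.val := by
    have := Finset.map_univ_equiv σ
    calc Multiset.map (⇑σ) Finset.univ.val = (Finset.univ.map σ.toEmbedding).val := rfl
    _ = Finset.univ.val := by rw [this]
  exact h2.symm

lemma oStat_eq_comp {n : ℕ} (x : Fin n → ℝ) (σ : Equiv.Perm (Fin n))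
    (hσ : Monotone (x ∘ σ)) (i : Fin n) :
    oStat x (i.1 + 1) = x (σ i) := by
  rw [oStat, if_neg (Nat.succ_ne_zero _), if_pos (Nat.succ_le_of_lt i.isLt),
    sort_eq_ofFn x σ hσ]
  simp only [Nat.add_sub_cancel]
  rw [List.getD_eq_getElem?_getD, List.getElem?_ofFn]
  simp [List.ofFnNthVal, i.isLt]

/-- ordering cells -/
def ocell {n : ℕ} (σ : Equiv.Perm (Fin n)) : Set (Fin n → ℝ) :=
  Set.Icc 0 1 ∩ {x | StrictMono (x ∘ σ)}

lemma measurableSet_ocell {n : ℕ} (σ : Equiv.Perm (Fin n)) :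
    MeasurableSet (ocell σ) := by
  refine measurableSet_Icc.inter ?_
  have : {x : Fin n → ℝ | StrictMono (x ∘ σ)} =
      ⋂ (p : Fin n × Fin n) (_ : p.1 < p.2), {x | x (σ p.1) < x (σ p.2)} := by
    ext x
    simp only [Set.mem_setOf_eq, Set.mem_iInter, StrictMono]
    exact ⟨fun h p hp => h hp, fun h i j hij => h (i, j) hij⟩
  rw [this]
  exact MeasurableSet.iInter fun p => MeasurableSet.iInter fun _ =>
    measurableSet_lt (measurable_pi_apply _) (measurable_pi_apply _)

lemma ocell_disjoint {n : ℕ} : Pairwise (Function.onFun Disjoint (ocell (n := n))) := by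
  intro σ τ hst
  rw [Function.onFun, Set.disjoint_left]
  rintro x ⟨_, hσ⟩ ⟨_, hτ⟩
  apply hst
  have hinj : Function.Injective x := by
    have h1 : Function.Injective (x ∘ σ) := hσ.injective
    have : x = (x ∘ σ) ∘ σ.symm := by ext i; simp
    rw [this]
    exact h1.comp σ.symm.injective
  have heq : x ∘ σ = x ∘ τ := by
    refine (StrictMono.range_inj hσ hτ).mp ?_
    rw [Set.range_comp, Set.range_comp]
    simp [Set.range_eq_univ.mpr σ.surjective, Set.range_eq_univ.mpr τ.surjective]
  ext i
  exact congrArg Fin.val (hinj (congrFun heq i))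

lemma hyperplane_null {n : ℕ} (i j : Fin (n+1)) (hij : i ≠ j) :
    volume {x : Fin (n+1) → ℝ | x i = x j} = 0 := by
  obtain ⟨j', hj'⟩ := Fin.exists_succAbove_eq (Ne.symm hij)
  set e := MeasurableEquiv.piFinSuccAbove (fun _ : Fin (n+1) => ℝ) i with he
  have hmp := volume_preserving_piFinSuccAbove (fun _ : Fin (n+1) => ℝ) i
  set T : Set (ℝ × (Fin n → ℝ)) := {p | p.1 = p.2 j'} with hT
  have hTmeas : MeasurableSet T :=
    measurableSet_eq_fun measurable_fst ((measurable_pi_apply j').comp measurable_snd)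
  have hpre : {x : Fin (n+1) → ℝ | x i = x j} = e ⁻¹' T := by
    ext x
    simp only [Set.mem_setOf_eq, Set.mem_preimage]
    show x i = x j ↔ (e x).1 = (e x).2 j'
    have h1 : (e x).1 = x i := rfl
    have h2 : (e x).2 j' = x (i.succAbove j') := rfl
    rw [h1, h2, hj']
  rw [hpre, hmp.measure_preimage hTmeas.nullMeasurableSet,
    MeasureTheory.Measure.volume_eq_prod, Measure.prod_apply_symm hTmeas]
  have hslice : ∀ z : Fin n → ℝ, ((fun t => (t, z)) ⁻¹' T) = {z j'} := by
    intro z; ext t; simp [hT]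
  simp only [hslice]
  simp [Real.volume_singleton]

def ninj (n : ℕ) : Set (Fin n → ℝ) :=
  ⋃ (p : Fin n × Fin n) (_ : p.1 ≠ p.2), {x | x p.1 = x p.2}

lemma ninj_null (n : ℕ) : volume (ninj n) = 0 := by
  refine measure_iUnion_null fun p => ?_
  by_cases hp : p.1 ≠ p.2
  · have hsub : (⋃ (_ : p.1 ≠ p.2), {x : Fin n → ℝ | x p.1 = x p.2}) ⊆ {x | x p.1 = x p.2} :=
      Set.iUnion_subset fun _ => subset_rfl
    refine measure_mono_null hsub ?_
    match n, p with
    | n + 1, p => exact hyperplane_null p.1 p.2 hp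
  · simp [hp]

lemma not_mem_ninj {n : ℕ} {x : Fin n → ℝ} (hx : x ∉ ninj n) : Function.Injective x := by
  intro i j hij
  by_contra hne
  exact hx (Set.mem_iUnion.mpr ⟨(i, j), Set.mem_iUnion.mpr ⟨hne, hij⟩⟩)

lemma cube_ae_eq_union (n : ℕ) :
    (Set.Icc (0 : Fin n → ℝ) 1 : Set (Fin n → ℝ)) =ᵐ[volume] ⋃ σ : Equiv.Perm (Fin n), ocell σ := by
  rw [MeasureTheory.ae_eq_set]
  constructor
  · refine measure_mono_null (fun x hx => ?_) (ninj_null n)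
    rcases hx with ⟨hxI, hxU⟩
    by_contra hxN
    have hinj : Function.Injective x := not_mem_ninj hxN
    apply hxU
    refine Set.mem_iUnion.mpr ⟨Tuple.sort x, hxI, ?_⟩
    exact (Tuple.monotone_sort x).strictMono_of_injective
      (hinj.comp (Tuple.sort x).injective)
  · have : (⋃ σ : Equiv.Perm (Fin n), ocell σ) \ Set.Icc 0 1 = ∅ := by
      rw [Set.diff_eq_empty]
      exact Set.iUnion_subset fun σ => Set.inter_subset_left
    rw [this]
    simp

lemma integral_ocell {n : ℕ} (a : Fin n → ℕ) (σ : Equiv.Perm (Fin n)) :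
    (∫ x in ocell σ, ∏ i, (x (σ i)) ^ (a i)) =
      ∫ x in simplex n, ∏ i, (x i) ^ (a i) := by
  set M := MeasurableEquiv.piCongrLeft (fun _ : Fin n => ℝ) σ.symm with hMdef
  have hM : ∀ (x : Fin n → ℝ) (i : Fin n), M x i = x (σ i) := by
    intro x i
    simp [hMdef, MeasurableEquiv.piCongrLeft, Equiv.piCongrLeft]
  have hmp : MeasurePreserving M volume volume :=
    volume_measurePreserving_piCongrLeft _ σ.symm
  have hIccIff : ∀ y : Fin n → ℝ,
      ((fun i => y (σ.symm i)) ∈ Set.Icc (0 : Fin n → ℝ) 1) ↔ y ∈ Set.Icc (0:Fin n → ℝ) 1 := by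
    intro y
    simp only [Set.mem_Icc, Pi.le_def]
    constructor
    · rintro ⟨h1, h2⟩
      refine ⟨fun i => ?_, fun i => ?_⟩
      · have := h1 (σ i); simpa using this
      · have := h2 (σ i); simpa using this
    · rintro ⟨h1, h2⟩
      refine ⟨fun i => ?_, fun i => ?_⟩
      · simpa using h1 (σ.symm i)
      · simpa using h2 (σ.symm i)
  have himg : M '' ocell σ = ocell 1 := by
    rw [MeasurableEquiv.image_eq_preimage_symm]
    ext y
    have hMsymm : M.symm y = fun i => y (σ.symm i) := by
      have h1 : M (fun i => y (σ.symm i)) = y := by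
        ext i; rw [hM]; simp
      have h2 := M.symm_apply_apply (fun i => y (σ.symm i))
      rw [h1] at h2
      exact h2
    simp only [Set.mem_preimage]
    show M.symm y ∈ ocell σ ↔ y ∈ ocell 1
    rw [hMsymm]
    unfold ocell
    have hcomp : ((fun i => y (σ.symm i)) ∘ ⇑σ) = y := by
      ext i; simp
    have hcomp1 : (y ∘ ⇑(1 : Equiv.Perm (Fin n))) = y := by
      ext i; simp
    simp only [Set.mem_inter_iff, Set.mem_setOf_eq, hcomp, hcomp1, hIccIff y]
  have step := hmp.setIntegral_image_emb M.measurableEmbedding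
    (fun y => ∏ i, (y i) ^ (a i)) (ocell σ)
  rw [himg] at step
  have step2 : (∫ x in ocell σ, ∏ i, ((M x) i) ^ (a i)) =
      ∫ x in ocell σ, ∏ i, (x (σ i)) ^ (a i) := by
    refine setIntegral_congr_fun (measurableSet_ocell σ) (fun x _ => ?_)
    exact Finset.prod_congr rfl fun i _ => by rw [hM]
  have step3 : (∫ y in ocell (1 : Equiv.Perm (Fin n)), ∏ i, (y i) ^ (a i)) =
      ∫ y in simplex n, ∏ i, (y i) ^ (a i) := by
    refine setIntegral_congr_set ?_
    rw [MeasureTheory.ae_eq_set]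
    constructor
    · have : ocell (1 : Equiv.Perm (Fin n)) \ simplex n = ∅ := by
        rw [Set.diff_eq_empty]
        rintro x ⟨hIcc, hsm⟩
        have hsm' : StrictMono x := by simpa using hsm
        rw [Set.mem_Icc, Pi.le_def, Pi.le_def] at hIcc
        exact ⟨hsm'.monotone, fun i => ⟨by simpa using hIcc.1 i, by simpa using hIcc.2 i⟩⟩
      rw [this]; simp
    · refine measure_mono_null (fun x hx => ?_) (ninj_null n)
      rcases hx with ⟨hxs, hxo⟩
      by_contra hxN
      have hinj : Function.Injective x := not_mem_ninj hxN
      apply hxo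
      refine ⟨simplex_subset_Icc n hxs, ?_⟩
      have hsm : StrictMono x := hxs.1.strictMono_of_injective hinj
      simpa using hsm
  rw [← step2, ← step, step3]

lemma cube_integral {n : ℕ} (a : Fin n → ℕ) :
    (∫ x in Set.Icc (0 : Fin n → ℝ) 1, ∏ i, (oStat x (i.1 + 1)) ^ (a i)) =
      (n.factorial : ℝ) * ∏ i : Fin n, (((i : ℕ) + 1 + ∑ j ∈ Iic i, a j : ℕ) : ℝ)⁻¹ := by
  set F := fun x : Fin n → ℝ => ∏ i, (oStat x (i.1 + 1)) ^ (a i) with hFdef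
  have hFcell : ∀ σ : Equiv.Perm (Fin n), ∀ x ∈ ocell σ, F x = ∏ i, (x (σ i)) ^ (a i) := by
    intro σ x hx
    exact Finset.prod_congr rfl fun i _ => by rw [oStat_eq_comp x σ hx.2.monotone]
  have hGint : ∀ σ : Equiv.Perm (Fin n),
      IntegrableOn (fun x => ∏ i, (x (σ i)) ^ (a i)) (ocell σ) volume := by
    intro σ
    have hcont : Continuous fun x : Fin n → ℝ => ∏ i, (x (σ i)) ^ (a i) := by fun_prop
    exact (hcont.continuousOn.integrableOn_compact isCompact_Icc).mono_set
      Set.inter_subset_left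
  have hFint : ∀ σ : Equiv.Perm (Fin n), IntegrableOn F (ocell σ) volume := by
    intro σ
    exact (hGint σ).congr_fun (fun x hx => (hFcell σ x hx).symm) (measurableSet_ocell σ)
  calc (∫ x in Set.Icc (0:Fin n → ℝ) 1, F x)
      = ∫ x in ⋃ σ : Equiv.Perm (Fin n), ocell σ, F x :=
        setIntegral_congr_set (cube_ae_eq_union n)
    _ = ∑' σ : Equiv.Perm (Fin n), ∫ x in ocell σ, F x :=
        integral_iUnion (fun σ => measurableSet_ocell σ) ocell_disjoint
          ((integrableOn_finite_iUnion).mpr hFint)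
    _ = ∑ σ : Equiv.Perm (Fin n), ∫ x in ocell σ, F x := tsum_fintype _
    _ = ∑ _σ : Equiv.Perm (Fin n), ∫ x in simplex n, ∏ i, (x i) ^ (a i) := by
        refine Finset.sum_congr rfl fun σ _ => ?_
        rw [← integral_ocell a σ]
        exact setIntegral_congr_fun (measurableSet_ocell σ) (hFcell σ)
    _ = (n.factorial : ℝ) * ∏ i : Fin n, (((i:ℕ) + 1 + ∑ j ∈ Iic i, a j : ℕ) : ℝ)⁻¹ := by
        rw [Finset.sum_const, integral_simplex n a]
        simp [Finset.card_univ, Fintype.card_perm, nsmul_eq_mul]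


lemma prod_Ico_factorial (s : ℕ) {a b : ℕ} (hab : a ≤ b) :
    (∏ i ∈ Ico a b, (i + 1 + s)) * (a + s).factorial = (b + s).factorial := by
  induction b, hab using Nat.le_induction with
  | base => simp
  | succ b hab ih =>
    rw [Finset.prod_Ico_succ_top hab, show b + 1 + s = b + s + 1 from by omega,
      Nat.factorial_succ, mul_right_comm, ih, mul_comm]

lemma natkey : ∀ (m n : ℕ) (K C : ℕ → ℕ),
    (∀ j, j < m → 1 ≤ K j ∧ K j ≤ n) →
    (∀ i j, i < j → j < m → K i < K j) →
    (∏ i ∈ range n, (i + 1 + ∑ j ∈ (range m).filter (fun j => K j ≤ i + 1), C j)) *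
      ∏ j ∈ range m, (K j - 1 + ∑ i ∈ range (j + 1), C i).factorial
    = (n + ∑ j ∈ range m, C j).factorial *
      ∏ j ∈ range m, (K j - 1 + ∑ i ∈ range j, C i).factorial := by
  intro m
  induction m with
  | zero =>
    intro n K C _ _
    simp [prod_range_add_one_eq_factorial]
  | succ m ih =>
    intro n K C hKb hKmono
    have hKm1 : 1 ≤ K m := (hKb m (by omega)).1
    have hKmn : K m ≤ n := (hKb m (by omega)).2
    have IH := ih n K C (fun j hj => hKb j (by omega))
      (fun i j hij hj => hKmono i j hij (by omega))
    set S' := ∑ j ∈ range m, C j with hS'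
    have hf1 : ∀ i : ℕ, K m - 1 ≤ i →
        (∑ j ∈ (range m).filter (fun j => K j ≤ i + 1), C j) = S' := by
      intro i hi
      rw [hS', Finset.filter_true_of_mem]
      intro j hj
      have := hKmono j m (mem_range.mp hj) (by omega)
      omega
    have hA : ∀ i : ℕ, (∑ j ∈ (range (m+1)).filter (fun j => K j ≤ i + 1), C j) =
        (∑ j ∈ (range m).filter (fun j => K j ≤ i + 1), C j) +
          if K m ≤ i + 1 then C m else 0 := by
      intro i
      rw [Finset.sum_filter, Finset.sum_filter, Finset.sum_range_succ]
    have hsplit : (∏ i ∈ range n,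
          (i + 1 + ∑ j ∈ (range (m+1)).filter (fun j => K j ≤ i + 1), C j))
        = (∏ i ∈ range (K m - 1),
            (i + 1 + ∑ j ∈ (range m).filter (fun j => K j ≤ i + 1), C j)) *
          ∏ i ∈ Ico (K m - 1) n, (i + 1 + (S' + C m)) := by
      rw [Finset.range_eq_Ico,
        ← Finset.prod_Ico_consecutive _ (Nat.zero_le (K m - 1)) (by omega : K m - 1 ≤ n),
        ← Finset.range_eq_Ico]
      congr 1
      · refine Finset.prod_congr rfl fun i hi => ?_
        rw [hA i, if_neg (by rw [mem_range] at hi; omega)]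
        omega
      · refine Finset.prod_congr rfl fun i hi => ?_
        rw [hA i, if_pos (by rw [mem_Ico] at hi; omega),
          hf1 i (by rw [mem_Ico] at hi; omega)]
    have hsplit' : (∏ i ∈ range n,
          (i + 1 + ∑ j ∈ (range m).filter (fun j => K j ≤ i + 1), C j))
        = (∏ i ∈ range (K m - 1),
            (i + 1 + ∑ j ∈ (range m).filter (fun j => K j ≤ i + 1), C j)) *
          ∏ i ∈ Ico (K m - 1) n, (i + 1 + S') := by
      rw [Finset.range_eq_Ico,
        ← Finset.prod_Ico_consecutive _ (Nat.zero_le (K m - 1)) (by omega : K m - 1 ≤ n),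
        ← Finset.range_eq_Ico]
      congr 1
      refine Finset.prod_congr rfl fun i hi => ?_
      rw [hf1 i (by rw [mem_Ico] at hi; omega)]
    have L1 : (∏ i ∈ Ico (K m - 1) n, (i + 1 + (S' + C m))) *
        ((K m - 1) + (S' + C m)).factorial = (n + (S' + C m)).factorial :=
      prod_Ico_factorial _ (by omega)
    have L2 : (∏ i ∈ Ico (K m - 1) n, (i + 1 + S')) * ((K m - 1) + S').factorial
        = (n + S').factorial := prod_Ico_factorial _ (by omega)
    rw [Finset.prod_range_succ (f := fun j => (K j - 1 + ∑ i ∈ range (j + 1), C i).factorial),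
      Finset.prod_range_succ (f := fun j => (K j - 1 + ∑ i ∈ range j, C i).factorial),
      Finset.sum_range_succ (f := C), hsplit, ← hS']
    set X := ∏ i ∈ range (K m - 1),
      (i + 1 + ∑ j ∈ (range m).filter (fun j => K j ≤ i + 1), C j) with hX
    set T := ∏ i ∈ Ico (K m - 1) n, (i + 1 + (S' + C m)) with hT
    set T' := ∏ i ∈ Ico (K m - 1) n, (i + 1 + S') with hT'
    set F1 := ∏ j ∈ range m, (K j - 1 + ∑ i ∈ range (j + 1), C i).factorial with hF1
    set F2 := ∏ j ∈ range m, (K j - 1 + ∑ i ∈ range j, C i).factorial with hF2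
    have IH2 : X * T' * F1 = (n + S').factorial * F2 := by
      rw [hsplit'] at IH
      exact IH
    have hT'pos : 0 < T' := Finset.prod_pos (fun i _ => by omega)
    have hvpos : 0 < ((K m - 1) + S').factorial := Nat.factorial_pos _
    apply Nat.eq_of_mul_eq_mul_right (Nat.mul_pos hT'pos hvpos)
    calc X * T * (F1 * (K m - 1 + (S' + C m)).factorial) *
          (T' * ((K m - 1) + S').factorial)
        = (X * T' * F1) * ((T * (K m - 1 + (S' + C m)).factorial) *
            ((K m - 1) + S').factorial) := by ring
      _ = ((n + S').factorial * F2) * ((n + (S' + C m)).factorial *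
            ((K m - 1) + S').factorial) := by rw [IH2, L1]
      _ = (n + (S' + C m)).factorial *
            (F2 * ((K m - 1) + S').factorial) * (T' * ((K m - 1) + S').factorial) := by
          rw [← L2]; ring

end

theorem stmt0 (n m : ℕ) (k c : Fin m → ℕ)
    (hk1 : ∀ j, 1 ≤ k j) (hkn : ∀ j, k j ≤ n) (hmono : StrictMono k) :
    (∫ x in Set.Icc (0 : Fin n → ℝ) 1, ∏ j, (oStat x (k j)) ^ (c j)) =
      (Nat.factorial n : ℝ) / (Nat.factorial (n + ∑ j, c j) : ℝ) *
        ∏ j, (Nat.factorial (k j - 1 + ∑ i ∈ Finset.Iic j, c i) : ℝ) /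
          (Nat.factorial (k j - 1 + ∑ i ∈ Finset.Iio j, c i) : ℝ) := by
  have hkn' : ∀ j : Fin m, k j - 1 < n := fun j => by
    have h1 := hk1 j; have h2 := hkn j; omega
  set g : Fin m → Fin n := fun j => ⟨k j - 1, hkn' j⟩ with hg
  set a : Fin n → ℕ := fun i => ∑ j ∈ univ.filter (fun j => g j = i), c j with ha
  have hfib : ∀ x : Fin n → ℝ,
      ∏ j, (oStat x (k j)) ^ (c j) = ∏ i, (oStat x (i.1 + 1)) ^ (a i) := by
    intro x
    rw [← Finset.prod_fiberwise_of_maps_to (g := g) (fun j _ => Finset.mem_univ (g j))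
      (fun j => (oStat x (k j)) ^ (c j))]
    refine Finset.prod_congr rfl fun i _ => ?_
    have hc : ∀ j ∈ univ.filter (fun j => g j = i),
        (oStat x (k j)) ^ (c j) = (oStat x (i.1 + 1)) ^ (c j) := by
      intro j hj
      rw [mem_filter] at hj
      have hkj : k j = i.1 + 1 := by
        have h := congrArg Fin.val hj.2
        simp only [hg] at h
        have := hk1 j
        omega
      rw [hkj]
    rw [Finset.prod_congr rfl hc, Finset.prod_pow_eq_pow_sum]
  have hstep : (∫ x in Set.Icc (0 : Fin n → ℝ) 1, ∏ j, (oStat x (k j)) ^ (c j))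
      = (n.factorial : ℝ) * ∏ i : Fin n, (((i : ℕ) + 1 + ∑ j ∈ Iic i, a j : ℕ) : ℝ)⁻¹ := by
    have hfe : (fun x : Fin n → ℝ => ∏ j, (oStat x (k j)) ^ (c j))
        = fun x => ∏ i, (oStat x (i.1 + 1)) ^ (a i) := funext hfib
    rw [show (∫ x in Set.Icc (0 : Fin n → ℝ) 1, ∏ j, (oStat x (k j)) ^ (c j))
        = ∫ x in Set.Icc (0 : Fin n → ℝ) 1, ∏ i, (oStat x (i.1 + 1)) ^ (a i) from by rw [hfe]]
    exact cube_integral a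
  rw [hstep]
  -- arithmetic part
  set K : ℕ → ℕ := fun t => if h : t < m then k ⟨t, h⟩ else 0 with hK
  set Cf : ℕ → ℕ := fun t => if h : t < m then c ⟨t, h⟩ else 0 with hCf
  have hKt : ∀ j : Fin m, K j.1 = k j := fun j => by simp [hK, j.isLt]
  have hCt : ∀ j : Fin m, Cf j.1 = c j := fun j => by simp [hCf, j.isLt]
  have hIic : ∀ j : Fin m, ∑ i ∈ Iic j, c i = ∑ t ∈ range (j.1 + 1), Cf t := by
    intro j
    have h0 : Iic j = univ.filter (fun i => i ≤ j) := by ext i; simp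
    rw [h0, Finset.sum_filter]
    have h1 : ∑ i : Fin m, (if i ≤ j then c i else 0)
        = ∑ t ∈ range m, (if t ≤ j.1 then Cf t else 0) := by
      rw [← Fin.sum_univ_eq_sum_range (fun t => if t ≤ j.1 then Cf t else 0) m]
      refine Finset.sum_congr rfl fun i _ => ?_
      rw [if_congr Fin.le_def rfl rfl, hCt i]
    rw [h1, ← Finset.sum_filter]
    congr 1
    ext t
    simp only [mem_filter, mem_range]
    have := j.isLt
    omega
  have hIio : ∀ j : Fin m, ∑ i ∈ Iio j, c i = ∑ t ∈ range j.1, Cf t := by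
    intro j
    have h0 : Iio j = univ.filter (fun i => i < j) := by ext i; simp
    rw [h0, Finset.sum_filter]
    have h1 : ∑ i : Fin m, (if i < j then c i else 0)
        = ∑ t ∈ range m, (if t < j.1 then Cf t else 0) := by
      rw [← Fin.sum_univ_eq_sum_range (fun t => if t < j.1 then Cf t else 0) m]
      refine Finset.sum_congr rfl fun i _ => ?_
      rw [if_congr Fin.lt_def rfl rfl, hCt i]
    rw [h1, ← Finset.sum_filter]
    congr 1
    ext t
    simp only [mem_filter, mem_range]
    have := j.isLt
    omega
  have htot : ∑ j, c j = ∑ t ∈ range m, Cf t := by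
    rw [← Fin.sum_univ_eq_sum_range (fun t => Cf t) m]
    exact Finset.sum_congr rfl fun j _ => (hCt j).symm
  have hAi : ∀ i : Fin n, (∑ l ∈ Iic i, a l)
      = ∑ t ∈ (range m).filter (fun t => K t ≤ i.1 + 1), Cf t := by
    intro i
    have h1 : (∑ l ∈ Iic i, a l) = ∑ j ∈ univ.filter (fun j => k j ≤ i.1 + 1), c j := by
      simp only [ha, Finset.sum_filter]
      rw [Finset.sum_comm]
      refine Finset.sum_congr rfl fun j _ => ?_
      have hrev : ∀ l ∈ Iic i, (if g j = l then c j else 0) = if l = g j then c j else 0 :=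
        fun l _ => if_congr eq_comm rfl rfl
      rw [Finset.sum_congr rfl hrev, Finset.sum_ite_eq' (Iic i) (g j) (fun _ => c j)]
      refine if_congr ?_ rfl rfl
      rw [mem_Iic, Fin.le_def]
      simp only [hg]
      have := hk1 j
      omega
    have h2 : (∑ j ∈ univ.filter (fun j => k j ≤ i.1 + 1), c j)
        = ∑ t ∈ (range m).filter (fun t => K t ≤ i.1 + 1), Cf t := by
      rw [Finset.sum_filter, Finset.sum_filter,
        ← Fin.sum_univ_eq_sum_range (fun t => if K t ≤ i.1 + 1 then Cf t else 0) m]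
      refine Finset.sum_congr rfl fun j _ => ?_
      rw [hKt j, hCt j]
    rw [h1, h2]
  have hkey := natkey m n K Cf
    (fun t ht => by
      have h1 := hk1 (⟨t, ht⟩ : Fin m)
      have h2 := hkn (⟨t, ht⟩ : Fin m)
      simp only [hK, dif_pos ht]
      exact ⟨h1, h2⟩)
    (fun i j hij hj => by
      have hi : i < m := lt_trans hij hj
      simp only [hK, dif_pos hi, dif_pos hj]
      exact hmono (show (⟨i, hi⟩ : Fin m) < ⟨j, hj⟩ from hij))
  set P := ∏ t ∈ range n, (t + 1 + ∑ l ∈ (range m).filter (fun l => K l ≤ t + 1), Cf l) with hPdef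
  set F1 := ∏ t ∈ range m, (K t - 1 + ∑ i ∈ range (t + 1), Cf i).factorial with hF1def
  set F2 := ∏ t ∈ range m, (K t - 1 + ∑ i ∈ range t, Cf i).factorial with hF2def
  have hP : (∏ i : Fin n, ((i : ℕ) + 1 + ∑ j ∈ Iic i, a j)) = P := by
    rw [hPdef, ← Fin.prod_univ_eq_prod_range]
    exact Finset.prod_congr rfl fun i _ => by rw [hAi i]
  have hF1 : (∏ j : Fin m, (k j - 1 + ∑ i ∈ Iic j, c i).factorial) = F1 := by
    rw [hF1def, ← Fin.prod_univ_eq_prod_range]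
    exact Finset.prod_congr rfl fun j _ => by rw [hKt j, hIic j]
  have hF2 : (∏ j : Fin m, (k j - 1 + ∑ i ∈ Iio j, c i).factorial) = F2 := by
    rw [hF2def, ← Fin.prod_univ_eq_prod_range]
    exact Finset.prod_congr rfl fun j _ => by rw [hKt j, hIio j]
  have hLHS : (∏ i : Fin n, (((i : ℕ) + 1 + ∑ j ∈ Iic i, a j : ℕ) : ℝ)⁻¹) = ((P : ℕ) : ℝ)⁻¹ := by
    rw [Finset.prod_inv_distrib, ← Nat.cast_prod, hP]
  have hRHS : (∏ j : Fin m, ((Nat.factorial (k j - 1 + ∑ i ∈ Finset.Iic j, c i) : ℝ) /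
        (Nat.factorial (k j - 1 + ∑ i ∈ Finset.Iio j, c i) : ℝ)))
      = ((F1 : ℕ) : ℝ) / ((F2 : ℕ) : ℝ) := by
    rw [Finset.prod_div_distrib, ← hF1, ← hF2, Nat.cast_prod, Nat.cast_prod]
  rw [hLHS, hRHS, htot]
  have hPpos : 0 < P := Finset.prod_pos fun t _ => by omega
  have hF2pos : 0 < F2 := Finset.prod_pos fun t _ => Nat.factorial_pos _
  have hcast : ((P : ℕ) : ℝ) * F1 = ((n + ∑ t ∈ range m, Cf t).factorial : ℝ) * F2 := by
    exact_mod_cast congrArg (Nat.cast (R := ℝ)) hkey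
  rw [div_mul_div_comm, eq_div_iff (by positivity)]
  rw [← hcast]
  field_simp
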